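/- arXiv:1810.00778 — 2 statements merged into one kernel-verified Lean document; each statement's English description precedes it below -/
import Mathlib

section
/- Let A and B be Hausdorff spaces and f : A → B continuous with closure(f(A)) ≠ B. Then f is not an epimorphism in the category of Hausdorff spaces: there exist a Hausdorff space C and distinct continuous maps g, h : B → C with g ∘ f = h ∘ f. -/
universe u

theorem not_epi_of_not_dense {A B : Type u} [TopologicalSpace A] [TopologicalSpace B]
    [T2Space A] [T2Space B] (f : A → B) (hf : Continuous f)
    (hnd : closure (Set.range f) ≠ Set.univ) :
    ∃ (C : Type u) (tC : TopologicalSpace C) (_ : @T2Space C tC) (g h : B → C),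
      @Continuous _ C _ tC g ∧ @Continuous _ C _ tC h ∧ g ≠ h ∧ g ∘ f = h ∘ f := by
  classical
  set K := closure (Set.range f) with hK
  have hKclosed : IsClosed K := isClosed_closure
  obtain ⟨b₀, hb₀⟩ : ∃ b, b ∉ K := by
    by_contra h
    push_neg at h
    exact hnd (Set.eq_univ_of_forall h)
  set π : B ⊕ B → B := Sum.elim id id with hπ
  have hπc : Continuous π := Continuous.sumElim continuous_id continuous_id
  let s : Setoid (B ⊕ B) :=
    ⟨fun x y => x = y ∨ (π x = π y ∧ π x ∈ K), by
      constructor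
      · intro x; exact Or.inl rfl
      · rintro x y (rfl | ⟨h1, h2⟩)
        · exact Or.inl rfl
        · exact Or.inr ⟨h1.symm, h1 ▸ h2⟩
      · rintro x y z (rfl | ⟨h1, h2⟩) hyz
        · exact hyz
        · rcases hyz with rfl | ⟨h3, _⟩
          · exact Or.inr ⟨h1, h2⟩
          · exact Or.inr ⟨h1.trans h3, h2⟩⟩
  let p : B ⊕ B → Quotient s := Quotient.mk s
  have hpc : Continuous p := continuous_quotient_mk'
  have hq : Topology.IsQuotientMap p := isQuotientMap_quotient_mk'
  have himg : ∀ S : Set (B ⊕ B), (∀ x y, s.r x y → x ∈ S → y ∈ S) →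
      p ⁻¹' (p '' S) = S := by
    intro S hsat
    ext z
    constructor
    · rintro ⟨w, hw, hwz⟩
      exact hsat w z (Quotient.exact hwz) hw
    · intro hz; exact ⟨z, hz, rfl⟩
  have hopen : ∀ S : Set (B ⊕ B), IsOpen S → (∀ x y, s.r x y → x ∈ S → y ∈ S) →
      IsOpen (p '' S) := by
    intro S hS hsat
    rw [← hq.isOpen_preimage, himg S hsat]
    exact hS
  have hdisj : ∀ S T : Set (B ⊕ B), (∀ x y, s.r x y → x ∈ S → y ∈ S) →
      Disjoint S T → Disjoint (p '' S) (p '' T) := by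
    intro S T hsat hST
    rw [Set.disjoint_left]
    rintro c ⟨w₁, hw₁, e₁⟩ ⟨w₂, hw₂, e₂⟩
    have : w₂ ∈ p ⁻¹' (p '' S) := ⟨w₁, hw₁, e₁.trans e₂.symm⟩
    rw [himg S hsat] at this
    exact Set.disjoint_left.mp hST this hw₂
  -- saturation facts
  have satπ : ∀ U : Set B, ∀ x y, s.r x y → x ∈ π ⁻¹' U → y ∈ π ⁻¹' U := by
    rintro U x y (rfl | ⟨h1, _⟩) hx
    · exact hx
    · simpa [Set.mem_preimage, ← h1] using hx
  have satL : ∀ x y, s.r x y → x ∈ Sum.inl '' Kᶜ → y ∈ Sum.inl '' Kᶜ := by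
    rintro x y (rfl | ⟨h1, h2⟩) hx
    · exact hx
    · exfalso
      rcases hx with ⟨u, hu, rfl⟩
      exact hu h2
  have satR : ∀ x y, s.r x y → x ∈ Sum.inr '' Kᶜ → y ∈ Sum.inr '' Kᶜ := by
    rintro x y (rfl | ⟨h1, h2⟩) hx
    · exact hx
    · exfalso
      rcases hx with ⟨u, hu, rfl⟩
      exact hu h2
  have hopenL : IsOpen (Sum.inl '' Kᶜ : Set (B ⊕ B)) :=
    Topology.IsOpenEmbedding.inl.isOpenMap _ hKclosed.isOpen_compl
  have hopenR : IsOpen (Sum.inr '' Kᶜ : Set (B ⊕ B)) :=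
    Topology.IsOpenEmbedding.inr.isOpenMap _ hKclosed.isOpen_compl
  have hdisjLR : Disjoint (Sum.inl '' Kᶜ : Set (B ⊕ B)) (Sum.inr '' Kᶜ) := by
    rw [Set.disjoint_left]
    rintro z ⟨u, _, rfl⟩ ⟨v, _, h⟩
    exact Sum.inl_ne_inr h.symm
  have hT2 : T2Space (Quotient s) := by
    constructor
    intro c₁ c₂ hne
    obtain ⟨x, rfl⟩ := Quotient.exists_rep c₁
    obtain ⟨y, rfl⟩ := Quotient.exists_rep c₂
    by_cases hxy : π x = π y
    · have hxK : π x ∉ K := fun h => hne (Quotient.sound (Or.inr ⟨hxy, h⟩))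
      rcases x with b₁ | b₁ <;> rcases y with b₂ | b₂
      · have hb : b₁ = b₂ := hxy
        subst hb
        exact absurd rfl hne
      · have hb : b₁ = b₂ := hxy
        subst hb
        refine ⟨p '' (Sum.inl '' Kᶜ), p '' (Sum.inr '' Kᶜ),
          hopen _ hopenL satL, hopen _ hopenR satR,
          ⟨Sum.inl b₁, ⟨b₁, hxK, rfl⟩, rfl⟩, ⟨Sum.inr b₁, ⟨b₁, hxK, rfl⟩, rfl⟩,
          hdisj _ _ satL hdisjLR⟩
      · have hb : b₁ = b₂ := hxy
        subst hb
        refine ⟨p '' (Sum.inr '' Kᶜ), p '' (Sum.inl '' Kᶜ),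
          hopen _ hopenR satR, hopen _ hopenL satL,
          ⟨Sum.inr b₁, ⟨b₁, hxK, rfl⟩, rfl⟩, ⟨Sum.inl b₁, ⟨b₁, hxK, rfl⟩, rfl⟩,
          (hdisj _ _ satL hdisjLR).symm⟩
      · have hb : b₁ = b₂ := hxy
        subst hb
        exact absurd rfl hne
    · obtain ⟨U, V, hU, hV, hxU, hyV, hUV⟩ := t2_separation hxy
      refine ⟨p '' (π ⁻¹' U), p '' (π ⁻¹' V),
        hopen _ (hU.preimage hπc) (satπ U), hopen _ (hV.preimage hπc) (satπ V),
        ⟨x, hxU, rfl⟩, ⟨y, hyV, rfl⟩,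
        hdisj _ _ (satπ U) (hUV.preimage π)⟩
  refine ⟨Quotient s, inferInstance, hT2, p ∘ Sum.inl, p ∘ Sum.inr,
    hpc.comp continuous_inl, hpc.comp continuous_inr, ?_, ?_⟩
  · intro hgh
    have h0 : p (Sum.inl b₀) = p (Sum.inr b₀) := congrFun hgh b₀
    rcases Quotient.exact h0 with h | ⟨_, h2⟩
    · exact Sum.inl_ne_inr h
    · exact hb₀ h2
  · funext a
    exact Quotient.sound (Or.inr ⟨rfl, subset_closure ⟨a, rfl⟩⟩)
end

section
/- Let C be a topological space and x, y ∈ C with x ≁ y, where ∼ is the relation identifying points not separated by continuous maps into Hausdorff spaces. Then there exist disjoint open sets in the Hausdorff quotient H(C) separating the classes r(x) and r(y). -/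
universe u

def hausSetoid (C : Type u) [TopologicalSpace C] : Setoid C where
  r x y := ∀ (D : Type u) [TopologicalSpace D] [T2Space D] (g : C → D), Continuous g → g x = g y
  iseqv := ⟨fun _ _ _ _ _ _ => rfl,
    fun h D _ _ g hg => (h D g hg).symm,
    fun h1 h2 D _ _ g hg => (h1 D g hg).trans (h2 D g hg)⟩

theorem haus_quotient_separates {C : Type u} [TopologicalSpace C] (x y : C)
    (hxy : ¬ (hausSetoid C).r x y) :
    ∃ O₁ O₂ : Set (Quotient (hausSetoid C)), IsOpen O₁ ∧ IsOpen O₂ ∧ Disjoint O₁ O₂ ∧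
      Quotient.mk (hausSetoid C) x ∈ O₁ ∧ Quotient.mk (hausSetoid C) y ∈ O₂ := by
  change ¬ (∀ (D : Type u) [TopologicalSpace D] [T2Space D] (g : C → D), Continuous g → g x = g y) at hxy
  simp only [not_forall] at hxy
  obtain ⟨D, _, _, g, hg, hne⟩ := hxy
  let g' : Quotient (hausSetoid C) → D := Quotient.lift g (fun a b hab => hab D g hg)
  have hg' : Continuous g' := continuous_quot_lift _ hg
  obtain ⟨U, V, hU, hV, hxU, hyV, hUV⟩ := t2_separation hne
  exact ⟨g' ⁻¹' U, g' ⁻¹' V, hU.preimage hg', hV.preimage hg',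
    hUV.preimage g', hxU, hyV⟩
end
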